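/- Let S be a nonempty set, let X^s = βℕ for every s ∈ S, and let a = (a^s)_{s∈S} ∈ ∏_{s∈S} βℕ. Then the Σ-product X_a = Σ_{s∈S} X^s(a) with base point a is a W̃-space. -/

import Mathlib

open Filter Set Topology

/-- `x` is a W̃-point: player I has a winning strategy in the game G̃(x), where player I
chooses arbitrary nonempty open sets and player II picks points in them; player I wins
when `x` is an accumulation point (cluster point) of the resulting sequence. -/
def IsWtildePoint {X : Type*} [TopologicalSpace X] (x : X) : Prop :=
  ∃ σ : List X → Set X,
    (∀ h : List X, IsOpen (σ h) ∧ (σ h).Nonempty) ∧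
    ∀ p : ℕ → X,
      (∀ n : ℕ, p n ∈ σ (List.ofFn fun i : Fin n => p i)) →
      MapClusterPt x atTop p

noncomputable section WtildeAux
open Classical

lemma isOpen_singleton_unit (m : ℕ) : IsOpen {stoneCechUnit m} := by
  classical
  set f : ℕ → Bool := fun k => decide (k = m) with hfdef
  have hf : Continuous f := continuous_of_discreteTopology
  have hext := stoneCechExtend_extends hf
  have key : {stoneCechUnit m} = stoneCechExtend hf ⁻¹' {true} := by
    apply Set.Subset.antisymm
    · rintro y rfl
      have : stoneCechExtend hf (stoneCechUnit m) = f m := congrFun hext m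
      simp [this, hfdef]
    · intro y hy
      have hopen : IsOpen (stoneCechExtend hf ⁻¹' {true}) :=
        (isOpen_discrete _).preimage (continuous_stoneCechExtend hf)
      have hsub : stoneCechExtend hf ⁻¹' {true} ∩ range stoneCechUnit ⊆ {stoneCechUnit m} := by
        rintro _ ⟨hz, k, rfl⟩
        have : f k = true := by
          have h2 := congrFun hext k
          simp only [Function.comp_apply] at h2
          rw [← h2]
          simpa using hz
        have : k = m := by simpa [hfdef] using this
        simp [this]
      have hy2 : y ∈ closure (stoneCechExtend hf ⁻¹' {true} ∩ range stoneCechUnit) :=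
        denseRange_stoneCechUnit.open_subset_closure_inter hopen hy
      have := closure_mono hsub hy2
      rwa [closure_singleton] at this
  rw [key]
  exact (isOpen_discrete _).preimage (continuous_stoneCechExtend hf)

variable {S : Type*} [Nonempty S] (a : S → StoneCech ℕ)

private lemma exists_enum (y : {x : S → StoneCech ℕ // {s : S | x s ≠ a s}.Countable}) :
    ∃ f : ℕ → S, {s : S | y.1 s ≠ a s} ⊆ range f := by
  obtain ⟨s₀⟩ := (inferInstance : Nonempty S)
  obtain ⟨f, hf⟩ := (y.2.insert s₀).exists_eq_range (insert_nonempty _ _)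
  exact ⟨f, hf ▸ subset_insert _ _⟩

/-- A chosen enumeration of (a superset of) the support of a point of the Σ-product. -/
private def en (y : {x : S → StoneCech ℕ // {s : S | x s ≠ a s}.Countable}) : ℕ → S :=
  (exists_enum a y).choose

private lemma en_spec (y : {x : S → StoneCech ℕ // {s : S | x s ≠ a s}.Countable}) :
    {s : S | y.1 s ≠ a s} ⊆ range (en a y) :=
  (exists_enum a y).choose_spec

variable (x : {x : S → StoneCech ℕ // {s : S | x s ≠ a s}.Countable})

/-- The coordinate of `S` encoded by an address `(i, j)`, relative to a history `h`. -/
private def Eaddr (h : List {x : S → StoneCech ℕ // {s : S | x s ≠ a s}.Countable})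
    (q : ℕ × ℕ) : S :=
  match q with
  | (0, j) => en a x j
  | (i+1, j) => en a (h.getD i x) j

/-- The list of tasks scheduled at the stage given by the history `h`. -/
private def taskList (h : List {x : S → StoneCech ℕ // {s : S | x s ≠ a s}.Countable}) :
    List ((ℕ × ℕ) × ℕ) :=
  ((Encodable.decode ((Nat.unpair h.length).1) : Option (List ((ℕ × ℕ) × ℕ))).getD [])

/-- The value imposed at the address of a task `e`: the value of the first task in the
list with the same address. -/
private def wval (h : List {x : S → StoneCech ℕ // {s : S | x s ≠ a s}.Countable})
    (e : (ℕ × ℕ) × ℕ) : ℕ :=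
  (((taskList a h).find? (fun e' => decide (Eaddr a x h e'.1 = Eaddr a x h e.1))).getD e).2

/-- The strategy of player I. -/
private def strat (h : List {x : S → StoneCech ℕ // {s : S | x s ≠ a s}.Countable}) :
    Set {x : S → StoneCech ℕ // {s : S | x s ≠ a s}.Countable} :=
  {y | ∀ e ∈ taskList a h, y.1 (Eaddr a x h e.1) = stoneCechUnit (wval a x h e)}

private lemma wval_eq (h : List {x : S → StoneCech ℕ // {s : S | x s ≠ a s}.Countable})
    {e : (ℕ × ℕ) × ℕ} (he : e ∈ taskList a h) {v : ℕ}
    (hval : ∀ e' ∈ taskList a h, Eaddr a x h e'.1 = Eaddr a x h e.1 → e'.2 = v) :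
    wval a x h e = v := by
  obtain ⟨z, hz⟩ : ∃ z, (taskList a h).find?
      (fun e' => decide (Eaddr a x h e'.1 = Eaddr a x h e.1)) = some z := by
    rw [← Option.isSome_iff_exists, List.find?_isSome]
    exact ⟨e, he, by simp⟩
  have hzmem := List.mem_of_find?_eq_some hz
  have hzp := List.find?_some hz
  simp only [decide_eq_true_eq] at hzp
  unfold wval
  rw [hz]
  exact hval z hzmem hzp

private lemma wval_congr (h : List {x : S → StoneCech ℕ // {s : S | x s ≠ a s}.Countable})
    {e e' : (ℕ × ℕ) × ℕ} (he' : e' ∈ taskList a h)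
    (hE : Eaddr a x h e.1 = Eaddr a x h e'.1) :
    wval a x h e = wval a x h e' := by
  unfold wval
  have hpred : (fun e'' => decide (Eaddr a x h e''.1 = Eaddr a x h e.1))
      = (fun e'' : (ℕ × ℕ) × ℕ => decide (Eaddr a x h e''.1 = Eaddr a x h e'.1)) := by
    funext e''; rw [hE]
  rw [hpred]
  obtain ⟨z, hz⟩ : ∃ z, (taskList a h).find?
      (fun e'' => decide (Eaddr a x h e''.1 = Eaddr a x h e'.1)) = some z := by
    rw [← Option.isSome_iff_exists, List.find?_isSome]
    exact ⟨e', he', by simp⟩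
  rw [hz]
  rfl

private lemma strat_isOpen (h : List {x : S → StoneCech ℕ // {s : S | x s ≠ a s}.Countable}) :
    IsOpen (strat a x h) := by
  have hrw : strat a x h = ⋂ e ∈ {e | e ∈ taskList a h},
      {y : {x : S → StoneCech ℕ // {s : S | x s ≠ a s}.Countable} |
        y.1 (Eaddr a x h e.1) = stoneCechUnit (wval a x h e)} := by
    ext y; simp [strat, Set.mem_iInter]
  rw [hrw]
  apply Set.Finite.isOpen_biInter ((taskList a h).finite_toSet)
  intro e _
  have hc : Continuous fun y : {x : S → StoneCech ℕ // {s : S | x s ≠ a s}.Countable} =>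
      y.1 (Eaddr a x h e.1) := (continuous_apply _).comp continuous_subtype_val
  exact (isOpen_singleton_unit (wval a x h e)).preimage hc

private lemma strat_nonempty (h : List {x : S → StoneCech ℕ // {s : S | x s ≠ a s}.Countable}) :
    (strat a x h).Nonempty := by
  classical
  set y0 : S → StoneCech ℕ := fun s =>
    if hs : ∃ e, e ∈ taskList a h ∧ Eaddr a x h e.1 = s then
      stoneCechUnit (wval a x h hs.choose) else a s with hy0
  have hsupp : {s : S | y0 s ≠ a s} ⊆ (fun e : (ℕ × ℕ) × ℕ => Eaddr a x h e.1) '' 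
      {e | e ∈ taskList a h} := by
    intro s hs
    by_contra hns
    have hne : ¬ ∃ e, e ∈ taskList a h ∧ Eaddr a x h e.1 = s := by
      rintro ⟨e, he, hE⟩
      exact hns ⟨e, he, hE⟩
    apply hs
    simp only [hy0, dif_neg hne]
  refine ⟨⟨y0, Set.Countable.mono hsupp (((taskList a h).finite_toSet.image _).countable)⟩, ?_⟩
  intro e he
  show y0 (Eaddr a x h e.1) = stoneCechUnit (wval a x h e)
  have hex : ∃ e', e' ∈ taskList a h ∧ Eaddr a x h e'.1 = Eaddr a x h e.1 := ⟨e, he, rfl⟩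
  simp only [hy0, dif_pos hex]
  congr 1
  exact (wval_congr a x h hex.choose_spec.1 hex.choose_spec.2.symm).symm

end WtildeAux

/-- For any nonempty index set `S` and base point `a`, the Σ-product of copies of βℕ
with base point `a` is a W̃-space. -/
theorem sigmaProduct_stoneCech_is_wtilde_space {S : Type*} [Nonempty S]
    (a : S → StoneCech ℕ) :
    ∀ x : {x : S → StoneCech ℕ // {s : S | x s ≠ a s}.Countable}, IsWtildePoint x := by
  classical
  intro x
  refine ⟨strat a x, fun h => ⟨strat_isOpen a x h, strat_nonempty a x h⟩, ?_⟩
  intro p hp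
  -- notation for histories
  have hlen : ∀ n : ℕ, (List.ofFn fun i : Fin n => p i).length = n := fun n => by
    simp
  have hgetD : ∀ n i, i < n → (List.ofFn fun i : Fin n => p i).getD i x = p i := by
    intro n i hi
    rw [List.getD_eq_getElem _ _ (by simpa using hi)]
    simp
  rw [mapClusterPt_iff_frequently]
  intro U hU
  rw [nhds_induced (Subtype.val)] at hU
  obtain ⟨W, hW, hWU⟩ := Filter.mem_comap.mp hU
  rw [nhds_pi] at hW
  obtain ⟨I, hIfin, V, hV, hVW⟩ := Filter.mem_pi.mp hW
  -- choose natural-number values in the neighborhoods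
  have hm : ∀ s : S, ∃ m : ℕ, s ∈ I → stoneCechUnit m ∈ V s := by
    intro s
    by_cases hs : s ∈ I
    · obtain ⟨m, hm⟩ := denseRange_stoneCechUnit.exists_mem_open isOpen_interior
        ⟨x.1 s, mem_interior_iff_mem_nhds.2 (hV s)⟩
      exact ⟨m, fun _ => interior_subset hm⟩
    · exact ⟨0, fun h => absurd h hs⟩
  choose m hmV using hm
  -- the countable set of coordinates touched during the play
  set T : Set S := range (en a x) ∪ ⋃ i, range (en a (p i)) with hT
  -- choose addresses for coordinates in T
  have hq : ∀ s : S, ∃ q : ℕ × ℕ, s ∈ T →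
      ∀ n : ℕ, q.1 ≤ n → Eaddr a x (List.ofFn fun i : Fin n => p i) q = s := by
    intro s
    by_cases hs : s ∈ T
    · rcases hs with ⟨j, hj⟩ | hs
      · exact ⟨(0, j), fun _ _ _ => hj⟩
      · rw [Set.mem_iUnion] at hs
        obtain ⟨i, j, hj⟩ := hs
        refine ⟨(i + 1, j), fun _ n hn => ?_⟩
        show en a ((List.ofFn fun i : Fin n => p i).getD i x) j = s
        rw [hgetD n i (by omega)]
        exact hj
    · exact ⟨(0, 0), fun h => absurd h hs⟩
  choose q hq using hq
  -- the key task list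
  set ls : List S := (hIfin.inter_of_left T).toFinset.toList with hls
  have hlsmem : ∀ s : S, s ∈ ls ↔ s ∈ I ∩ T := by
    intro s; rw [hls, Finset.mem_toList, Set.Finite.mem_toFinset]
  set LK : List ((ℕ × ℕ) × ℕ) := ls.map (fun s => (q s, m s)) with hLK
  set B : ℕ := (ls.map fun s => (q s).1).sum with hB
  have hBound : ∀ s ∈ ls, (q s).1 ≤ B :=
    fun s hs => List.single_le_sum (by simp) _ (List.mem_map_of_mem hs)
  rw [frequently_atTop]
  intro N
  set n : ℕ := Nat.pair (Encodable.encode LK) (max N B) with hn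
  have hNn : N ≤ n := le_trans (le_max_left _ _) (Nat.right_le_pair _ _)
  have hBn : B ≤ n := le_trans (le_max_right _ _) (Nat.right_le_pair _ _)
  refine ⟨n, hNn, ?_⟩
  have hLn : taskList a (List.ofFn fun i : Fin n => p i) = LK := by
    unfold taskList
    rw [hlen n, hn, Nat.unpair_pair]
    simp [Encodable.encodek]
  have hmem := hp n
  apply hWU
  show (p n).1 ∈ W
  apply hVW
  intro s hsI
  by_cases hsT : s ∈ T
  · -- controlled coordinate
    have hsls : s ∈ ls := (hlsmem s).mpr ⟨hsI, hsT⟩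
    have heL : (q s, m s) ∈ LK := List.mem_map_of_mem hsls
    rw [← hLn] at heL
    have haddr : Eaddr a x (List.ofFn fun i : Fin n => p i) (q s) = s :=
      hq s hsT n (le_trans (hBound s hsls) hBn)
    have hval := hmem (q s, m s) heL
    have hw : wval a x (List.ofFn fun i : Fin n => p i) (q s, m s) = m s := by
      apply wval_eq a x _ heL
      intro e' he' hE'
      rw [hLn] at he'
      obtain ⟨s', hs'ls, rfl⟩ := List.mem_map.mp he'
      have hs'T : s' ∈ T := ((hlsmem s').mp hs'ls).2
      have haddr' : Eaddr a x (List.ofFn fun i : Fin n => p i) (q s') = s' :=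
        hq s' hs'T n (le_trans (hBound s' hs'ls) hBn)
      have : s' = s := by
        rw [← haddr', ← haddr]
        exact hE'
      rw [this]
    rw [hw] at hval
    rw [haddr] at hval
    rw [hval]
    exact hmV s hsI
  · -- untouched coordinate
    have h1 : (p n).1 s = a s := by
      by_contra hne
      exact hsT (Or.inr (Set.mem_iUnion.2 ⟨n, en_spec a (p n) hne⟩))
    have h2 : x.1 s = a s := by
      by_contra hne
      exact hsT (Or.inl (en_spec a x hne))
    rw [h1, ← h2]
    exact mem_of_mem_nhds (hV s)
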